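/- Let κ ≥ 4 and let h : [0, π] → ℝ be continuously differentiable on [0, π] and twice differentiable on (0, π), solving the profile equation h''(θ) + (cos θ / sin θ)·h'(θ) − sin(2h(θ))/(2 sin²θ) − (κ/2)·sin(2h(θ) − 2θ) = 0 on (0, π), with h(0) = h(π) = π, h(θ) + h(π − θ) = 2π for all θ ∈ [0, π], and π ≤ h(θ) ≤ π + θ for all θ ∈ [0, π/2]. Then −h'(π/2) ≤ 2·√(2·E(h)·√κ), where E(h) = (1/2)·∫₀^π [h'(θ)²·sin θ + sin²(h(θ))/sin θ + κ·sin²(h(θ) − θ)·sin θ] dθ. -/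

import Mathlib

open Real Set


private lemma equator_aux_alg (κ a s c G : ℝ) (hκ : 4 ≤ κ) (ha0 : 0 ≤ a) (ha1 : a ≤ 1)
    (hc : |c| ≤ 1) :
    (κ/2) * a^2 * (2*s*c) * G ≤ (Real.sqrt κ/2) * (G^2 + κ*s^2) * a := by
  have h0κ : (0:ℝ) ≤ κ := by linarith
  have hsq : Real.sqrt κ ^ 2 = κ := Real.sq_sqrt h0κ
  have hr0 : (0:ℝ) ≤ Real.sqrt κ := Real.sqrt_nonneg κ
  have e1 : s * c * G ≤ |s| * |G| := by
    have h1 : s*c*G ≤ |s*c*G| := le_abs_self _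
    have h2 : |s*c*G| = |s| * |c| * |G| := by rw [abs_mul, abs_mul]
    nlinarith [mul_le_mul_of_nonneg_right
      (mul_le_mul_of_nonneg_left hc (abs_nonneg s)) (abs_nonneg G)]
  have e2 : κ * a^2 * (s*c*G) ≤ κ * a * (|s| * |G|) := by
    have haa : a^2 ≤ a := by nlinarith
    calc κ * a^2 * (s*c*G) ≤ κ * a^2 * (|s| * |G|) :=
          mul_le_mul_of_nonneg_left e1 (by positivity)
      _ ≤ κ * a * (|s| * |G|) := by
          apply mul_le_mul_of_nonneg_right _ (by positivity)
          nlinarith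
  have e3 : κ * (|s| * |G|) ≤ (Real.sqrt κ/2) * (G^2 + κ*s^2) := by
    have key : 2*Real.sqrt κ*(|s| * |G|) ≤ κ*s^2 + G^2 := by
      nlinarith [sq_nonneg (Real.sqrt κ*|s| - |G|), sq_abs s, sq_abs G]
    have e4 := mul_le_mul_of_nonneg_left key (show (0:ℝ) ≤ Real.sqrt κ/2 by positivity)
    calc κ * (|s| * |G|) = (Real.sqrt κ/2) * (2*Real.sqrt κ*(|s| * |G|)) := by
          rw [show (Real.sqrt κ/2) * (2*Real.sqrt κ*(|s| * |G|))
              = (Real.sqrt κ*Real.sqrt κ)*(|s| * |G|) by ring, Real.mul_self_sqrt h0κ]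
      _ ≤ (Real.sqrt κ/2) * (κ*s^2 + G^2) := e4
      _ = (Real.sqrt κ/2) * (G^2 + κ*s^2) := by ring
  calc (κ/2) * a^2 * (2*s*c) * G = κ * a^2 * (s*c*G) := by ring
    _ ≤ κ * a * (|s| * |G|) := e2
    _ = a * (κ * (|s| * |G|)) := by ring
    _ ≤ a * ((Real.sqrt κ/2) * (G^2 + κ*s^2)) := mul_le_mul_of_nonneg_left e3 ha0
    _ = (Real.sqrt κ/2) * (G^2 + κ*s^2) * a := by ring

private lemma equator_aux_q2int (h : ℝ → ℝ) (hhc : ContinuousOn h (Set.Icc 0 π))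
    (hπ : h π = π)
    (hsym : ∀ θ ∈ Set.Icc (0 : ℝ) π, h θ + h (π - θ) = 2 * π)
    (hwedge : ∀ θ ∈ Set.Icc (0 : ℝ) (π / 2), π ≤ h θ ∧ h θ ≤ π + θ) :
    IntervalIntegrable (fun θ => Real.sin (h θ)^2 / Real.sin θ)
      MeasureTheory.volume 0 π := by
  have hπpos := Real.pi_pos
  have hle : (0:ℝ) ≤ π := hπpos.le
  have key2 : ∀ θ ∈ Set.Icc (0:ℝ) (π/2), Real.sin (h θ)^2 ≤ θ^2 := by
    intro θ hθ
    obtain ⟨hw1, hw2⟩ := hwedge θ hθ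
    have e1 : Real.sin (h θ)^2 = Real.sin (h θ - π)^2 := by
      rw [show h θ = (h θ - π) + π by ring, Real.sin_add_pi]; ring
    rw [e1]
    calc Real.sin (h θ - π)^2 ≤ (h θ - π)^2 := Real.sin_sq_le_sq
      _ ≤ θ^2 := by nlinarith [hθ.1]
  have aux : ∀ t : ℝ, 0 < t → t ≤ π/2 → ∀ y : ℝ, y^2 ≤ t^2 →
      y^2 / Real.sin t ≤ π^2/4 := by
    intro t ht ht2 y hy
    have hs : 2/π * t ≤ Real.sin t := Real.mul_le_sin ht.le ht2
    have hsp : 0 < Real.sin t := lt_of_lt_of_le (by positivity) hs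
    rw [div_le_iff₀ hsp]
    calc y^2 ≤ t^2 := hy
      _ ≤ (π^2/4) * (2/π * t) := by
          rw [show (π^2/4) * (2/π * t) = (π/2) * t by field_simp; ring]
          nlinarith
      _ ≤ (π^2/4) * Real.sin t := mul_le_mul_of_nonneg_left hs (by positivity)
  have keyπ : ∀ θ ∈ Set.Ioc (0:ℝ) π, ‖Real.sin (h θ)^2 / Real.sin θ‖ ≤ π^2/4 := by
    intro θ hθ
    have hsin0 : 0 ≤ Real.sin θ := Real.sin_nonneg_of_nonneg_of_le_pi hθ.1.le hθ.2
    have hnn : 0 ≤ Real.sin (h θ)^2 / Real.sin θ := div_nonneg (sq_nonneg _) hsin0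
    rw [Real.norm_eq_abs, abs_of_nonneg hnn]
    by_cases hhalf : θ ≤ π/2
    · exact aux θ hθ.1 hhalf _ (key2 θ ⟨hθ.1.le, hhalf⟩)
    · push_neg at hhalf
      by_cases hθπ : θ = π
      · simp [hθπ, hπ, Real.sin_pi]
        positivity
      · set σ := π - θ with hσ
        have hσ1 : 0 < σ := by
          have := lt_of_le_of_ne hθ.2 hθπ
          simp [hσ]; linarith
        have hσ2 : σ ≤ π/2 := by simp [hσ]; linarith
        have hhσ : h θ = 2*π - h σ := by
          have := hsym σ ⟨hσ1.le, by linarith⟩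
          rw [show π - σ = θ by simp [hσ]] at this
          linarith
        have e1 : Real.sin (h θ)^2 = Real.sin (h σ)^2 := by
          rw [hhσ, show 2*π - h σ = -(h σ) + 2*π by ring, Real.sin_add_two_pi,
            Real.sin_neg]
          ring
        have e2 : Real.sin θ = Real.sin σ := by
          rw [show θ = π - σ by simp [hσ], Real.sin_pi_sub]
        rw [e1, e2]
        exact aux σ hσ1 hσ2 _ (key2 σ ⟨hσ1.le, hσ2⟩)
  have hq2m : MeasureTheory.AEStronglyMeasurable (fun θ => Real.sin (h θ)^2 / Real.sin θ)
      (MeasureTheory.volume.restrict (Set.Ioc 0 π)) := by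
    have hco : ContinuousOn (fun θ => Real.sin (h θ)^2 / Real.sin θ) (Set.Ioo 0 π) := by
      apply ContinuousOn.div
      · exact (Real.continuous_sin.comp_continuousOn
          (hhc.mono Set.Ioo_subset_Icc_self)).pow 2
      · exact Real.continuous_sin.continuousOn
      · exact fun x hx => ne_of_gt (Real.sin_pos_of_pos_of_lt_pi hx.1 hx.2)
    have := hco.aestronglyMeasurable (μ := MeasureTheory.volume) measurableSet_Ioo
    rwa [MeasureTheory.Measure.restrict_congr_set MeasureTheory.Ioo_ae_eq_Ioc] at this
  rw [intervalIntegrable_iff_integrableOn_Ioc_of_le hle]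
  apply MeasureTheory.Integrable.mono' (g := fun _ => π^2/4)
    (MeasureTheory.integrableOn_const measure_Ioc_lt_top.ne) hq2m
  exact (MeasureTheory.ae_restrict_iff' measurableSet_Ioc).mpr
    (Filter.Eventually.of_forall keyπ)

set_option maxHeartbeats 1000000 in
/-- Bound on the derivative at the equator for hemispheric type-(1,1) critical
    profiles in the first wedge: −h'(π/2) ≤ 2√(2 E(h) √κ). -/
theorem equator_derivative_bound (κ : ℝ) (hκ : 4 ≤ κ) (h : ℝ → ℝ)
    (hC1 : ContDiffOn ℝ 1 h (Set.Icc 0 π))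
    (hC2 : ∀ θ ∈ Set.Ioo (0 : ℝ) π, DifferentiableAt ℝ (deriv h) θ)
    (heq : ∀ θ ∈ Set.Ioo (0 : ℝ) π,
      deriv (deriv h) θ + (Real.cos θ / Real.sin θ) * deriv h θ
        - Real.sin (2 * h θ) / (2 * Real.sin θ ^ 2)
        - (κ / 2) * Real.sin (2 * h θ - 2 * θ) = 0)
    (h0 : h 0 = π) (hπ : h π = π)
    (hsym : ∀ θ ∈ Set.Icc (0 : ℝ) π, h θ + h (π - θ) = 2 * π)
    (hwedge : ∀ θ ∈ Set.Icc (0 : ℝ) (π / 2), π ≤ h θ ∧ h θ ≤ π + θ) :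
    -deriv h (π / 2) ≤
      2 * Real.sqrt (2 * ((1 / 2) * (∫ θ in (0 : ℝ)..π,
          (deriv h θ) ^ 2 * Real.sin θ
          + Real.sin (h θ) ^ 2 / Real.sin θ
          + κ * Real.sin (h θ - θ) ^ 2 * Real.sin θ)) * Real.sqrt κ) := by
  have hπpos := Real.pi_pos
  have hle : (0:ℝ) ≤ π := hπpos.le
  have hle2 : (0:ℝ) ≤ π/2 := by linarith
  have h0κ : (0:ℝ) ≤ κ := by linarith
  have hr0 : (0:ℝ) ≤ Real.sqrt κ := Real.sqrt_nonneg κ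
  set g := derivWithin h (Set.Icc 0 π) with hg
  have hgc : ContinuousOn g (Set.Icc 0 π) :=
    hC1.continuousOn_derivWithin (uniqueDiffOn_Icc hπpos) le_rfl
  have hhc : ContinuousOn h (Set.Icc 0 π) := hC1.continuousOn
  have hmem : ∀ θ ∈ Set.Ioo (0:ℝ) π, Set.Icc (0:ℝ) π ∈ nhds θ :=
    fun θ hθ => Icc_mem_nhds hθ.1 hθ.2
  have hdiff : ∀ θ ∈ Set.Ioo (0:ℝ) π, HasDerivAt h (g θ) θ := by
    intro θ hθ
    have hd : DifferentiableAt ℝ h θ :=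
      ((hC1.differentiableOn one_ne_zero) θ (Set.Ioo_subset_Icc_self hθ)).differentiableAt (hmem θ hθ)
    have := hd.hasDerivAt
    rwa [hg, derivWithin_of_mem_nhds (hmem θ hθ)]
  have hgd : ∀ θ ∈ Set.Ioo (0:ℝ) π, deriv h θ = g θ :=
    fun θ hθ => (derivWithin_of_mem_nhds (hmem θ hθ)).symm
  have hsub : Set.Icc (0:ℝ) (π/2) ⊆ Set.Icc (0:ℝ) π :=
    Set.Icc_subset_Icc le_rfl (by linarith)
  -- the function W and its derivative F
  set W : ℝ → ℝ := fun t => ((Real.sin t * g t)^2 - Real.sin (h t)^2)/2 with hW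
  set F : ℝ → ℝ := fun t => (κ/2) * Real.sin t^2 * Real.sin (2*h t - 2*t) * g t with hF
  have hWd : ∀ θ ∈ Set.Ioo (0:ℝ) (π/2), HasDerivAt W (F θ) θ := by
    intro θ hθ
    have hθ' : θ ∈ Set.Ioo (0:ℝ) π := ⟨hθ.1, hθ.2.trans (by linarith)⟩
    have hs : Real.sin θ ≠ 0 := ne_of_gt (Real.sin_pos_of_pos_of_lt_pi hθ'.1 hθ'.2)
    have hh := hdiff θ hθ'
    have hh2 : HasDerivAt (deriv h) (deriv (deriv h) θ) θ := (hC2 θ hθ').hasDerivAt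
    have h1 : HasDerivAt (fun t => Real.sin t * deriv h t)
        (Real.cos θ * deriv h θ + Real.sin θ * deriv (deriv h) θ) θ :=
      (Real.hasDerivAt_sin θ).mul hh2
    have h2 := h1.pow 2
    have h3 : HasDerivAt (fun t => Real.sin (h t)) (Real.cos (h θ) * g θ) θ :=
      (Real.hasDerivAt_sin (h θ)).comp θ hh
    have h4 := h3.pow 2
    have h5 := (h2.sub h4).div_const 2
    have hev : W =ᶠ[nhds θ] (fun t => ((Real.sin t * deriv h t)^2 - Real.sin (h t)^2)/2) := by
      filter_upwards [Ioo_mem_nhds hθ'.1 hθ'.2] with t ht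
      simp only [hW]
      rw [hgd t ht]
    have h6 := h5.congr_of_eventuallyEq hev
    convert h6 using 1
    case e'_4 => rfl
    case e'_5 => rfl
    have hode : deriv (deriv h) θ = -(Real.cos θ / Real.sin θ) * deriv h θ
        + Real.sin (2 * h θ) / (2 * Real.sin θ ^ 2) + (κ/2) * Real.sin (2*h θ - 2*θ) := by
      have := heq θ hθ'
      linarith
    simp only [hF]
    rw [hode, hgd θ hθ', Real.sin_two_mul]
    field_simp
    ring
  -- continuity of W and F on [0, π/2]
  have hWcont : ContinuousOn W (Set.Icc 0 (π/2)) := by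
    apply ContinuousOn.div_const
    apply ContinuousOn.sub
    · exact ((Real.continuous_sin.continuousOn.mul (hgc.mono hsub)).pow 2)
    · exact ((Real.continuous_sin.comp_continuousOn (hhc.mono hsub)).pow 2)
  have hFcont : ContinuousOn F (Set.Icc 0 (π/2)) := by
    apply ContinuousOn.mul _ (hgc.mono hsub)
    apply ContinuousOn.mul
    · exact continuousOn_const.mul ((Real.continuous_sin.continuousOn).pow 2)
    · apply Real.continuous_sin.comp_continuousOn
      exact (continuousOn_const.mul (hhc.mono hsub)).sub
        (continuousOn_const.mul continuousOn_id)
  have hFint : IntervalIntegrable F MeasureTheory.volume 0 (π/2) := by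
    apply ContinuousOn.intervalIntegrable
    rwa [Set.uIcc_of_le hle2]
  -- FTC
  have hFTC : ∫ t in (0:ℝ)..(π/2), F t = W (π/2) - W 0 :=
    intervalIntegral.integral_eq_sub_of_hasDeriv_right_of_le hle2 hWcont
      (fun x hx => (hWd x hx).hasDerivWithinAt) hFint
  have hhalfmem : (π/2) ∈ Set.Ioo (0:ℝ) π := ⟨by linarith, by linarith⟩
  have hhπ2 : h (π/2) = π := by
    have := hsym (π/2) ⟨hle2, by linarith⟩
    rw [show π - π/2 = π/2 by ring] at this
    linarith
  have hW0 : W 0 = 0 := by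
    simp only [hW, h0, Real.sin_zero, Real.sin_pi]
    norm_num
  have hWhalf : W (π/2) = (deriv h (π/2))^2/2 := by
    simp only [hW, hhπ2, Real.sin_pi_div_two, Real.sin_pi]
    rw [hgd (π/2) hhalfmem]
    ring
  -- pointwise bound F ≤ R
  set R : ℝ → ℝ := fun t =>
    (Real.sqrt κ/2) * ((g t)^2 + κ * Real.sin (h t - t)^2) * Real.sin t with hR
  have hpt : ∀ θ ∈ Set.Icc (0:ℝ) (π/2), F θ ≤ R θ := by
    intro θ hθ
    have ha0 : 0 ≤ Real.sin θ := Real.sin_nonneg_of_nonneg_of_le_pi hθ.1 (by linarith [hθ.2])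
    have ha1 : Real.sin θ ≤ 1 := Real.sin_le_one θ
    have h3 : Real.sin (2*h θ - 2*θ) = 2 * Real.sin (h θ - θ) * Real.cos (h θ - θ) := by
      rw [show 2*h θ - 2*θ = 2*(h θ - θ) by ring, Real.sin_two_mul]
    show (κ/2) * Real.sin θ^2 * Real.sin (2*h θ - 2*θ) * g θ
      ≤ (Real.sqrt κ/2) * ((g θ)^2 + κ * Real.sin (h θ - θ)^2) * Real.sin θ
    rw [h3]
    exact equator_aux_alg κ (Real.sin θ) (Real.sin (h θ - θ)) (Real.cos (h θ - θ)) (g θ)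
      hκ ha0 ha1 (Real.abs_cos_le_one _)
  have hRcont : ContinuousOn R (Set.Icc 0 (π/2)) := by
    apply ContinuousOn.mul _ Real.continuous_sin.continuousOn
    apply ContinuousOn.mul continuousOn_const
    apply ContinuousOn.add ((hgc.mono hsub).pow 2)
    apply ContinuousOn.mul continuousOn_const
    apply ContinuousOn.pow
    apply Real.continuous_sin.comp_continuousOn
    exact (hhc.mono hsub).sub continuousOn_id
  have hRint : IntervalIntegrable R MeasureTheory.volume 0 (π/2) := by
    apply ContinuousOn.intervalIntegrable
    rwa [Set.uIcc_of_le hle2]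
  have hFR : ∫ t in (0:ℝ)..(π/2), F t ≤ ∫ t in (0:ℝ)..(π/2), R t :=
    intervalIntegral.integral_mono_on hle2 hFint hRint hpt
  -- the nice energy integrand Q
  set Q : ℝ → ℝ := fun t => g t^2 * Real.sin t + Real.sin (h t)^2 / Real.sin t
    + κ * Real.sin (h t - t)^2 * Real.sin t with hQ
  -- integrability of the middle term
  have hq2i : IntervalIntegrable (fun θ => Real.sin (h θ)^2 / Real.sin θ)
      MeasureTheory.volume 0 π := equator_aux_q2int h hhc hπ hsym hwedge
  have hq1i : IntervalIntegrable (fun t => g t^2 * Real.sin t) MeasureTheory.volume 0 π := by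
    apply ContinuousOn.intervalIntegrable
    rw [Set.uIcc_of_le hle]
    exact (hgc.pow 2).mul Real.continuous_sin.continuousOn
  have hq3i : IntervalIntegrable (fun t => κ * Real.sin (h t - t)^2 * Real.sin t)
      MeasureTheory.volume 0 π := by
    apply ContinuousOn.intervalIntegrable
    rw [Set.uIcc_of_le hle]
    apply ContinuousOn.mul _ Real.continuous_sin.continuousOn
    apply ContinuousOn.mul continuousOn_const
    exact ((Real.continuous_sin.comp_continuousOn (hhc.sub continuousOn_id)).pow 2)
  have hQi : IntervalIntegrable Q MeasureTheory.volume 0 π := (hq1i.add hq2i).add hq3i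
  have hQi1 : IntervalIntegrable Q MeasureTheory.volume 0 (π/2) := by
    apply hQi.mono_set
    rw [Set.uIcc_of_le hle2, Set.uIcc_of_le hle]
    exact hsub
  have hQi2 : IntervalIntegrable Q MeasureTheory.volume (π/2) π := by
    apply hQi.mono_set
    rw [Set.uIcc_of_le (by linarith : (π/2) ≤ π), Set.uIcc_of_le hle]
    exact Set.Icc_subset_Icc (by linarith) le_rfl
  -- Q is nonnegative on [0, π]
  have hQpos : ∀ t ∈ Set.Icc (0:ℝ) π, 0 ≤ Q t := by
    intro t ht
    have hs0 : 0 ≤ Real.sin t := Real.sin_nonneg_of_nonneg_of_le_pi ht.1 ht.2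
    have : 0 ≤ Real.sin (h t)^2 / Real.sin t := div_nonneg (sq_nonneg _) hs0
    simp only [hQ]
    positivity
  -- R ≤ (√κ/2) Q pointwise on [0, π/2]
  have hRQ : ∀ t ∈ Set.Icc (0:ℝ) (π/2), R t ≤ (Real.sqrt κ/2) * Q t := by
    intro t ht
    have hs0 : 0 ≤ Real.sin t := Real.sin_nonneg_of_nonneg_of_le_pi ht.1 (by linarith [ht.2])
    have hmid : 0 ≤ Real.sin (h t)^2 / Real.sin t := div_nonneg (sq_nonneg _) hs0
    simp only [hR, hQ]
    nlinarith [hmid, hr0]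
  have hRQint : ∫ t in (0:ℝ)..(π/2), R t ≤ ∫ t in (0:ℝ)..(π/2), (Real.sqrt κ/2) * Q t :=
    intervalIntegral.integral_mono_on hle2 hRint (hQi1.const_mul _) hRQ
  have hconst : ∫ t in (0:ℝ)..(π/2), (Real.sqrt κ/2) * Q t
      = (Real.sqrt κ/2) * ∫ t in (0:ℝ)..(π/2), Q t :=
    intervalIntegral.integral_const_mul _ _
  -- splitting the integral of Q
  have hsplit : (∫ t in (0:ℝ)..(π/2), Q t) + ∫ t in (π/2:ℝ)..π, Q t = ∫ t in (0:ℝ)..π, Q t :=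
    intervalIntegral.integral_add_adjacent_intervals hQi1 hQi2
  have h2nd : 0 ≤ ∫ t in (π/2:ℝ)..π, Q t :=
    intervalIntegral.integral_nonneg (by linarith)
      (fun u hu => hQpos u ⟨by linarith [hu.1], hu.2⟩)
  have hQhalf : (∫ t in (0:ℝ)..(π/2), Q t) ≤ ∫ t in (0:ℝ)..π, Q t := by linarith
  -- the target integral equals the integral of Q
  have hne : ∀ᵐ x : ℝ ∂MeasureTheory.volume, x ≠ π := by
    have := MeasureTheory.measure_eq_zero_iff_ae_notMem.mp
      (MeasureTheory.measure_singleton (μ := MeasureTheory.volume) (π:ℝ))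
    simpa using this
  have hae : ∀ᵐ x : ℝ ∂MeasureTheory.volume, x ∈ Set.uIoc (0:ℝ) π →
      ((deriv h x) ^ 2 * Real.sin x + Real.sin (h x) ^ 2 / Real.sin x
        + κ * Real.sin (h x - x) ^ 2 * Real.sin x) = Q x := by
    filter_upwards [hne] with x hx hxm
    rw [Set.uIoc_of_le hle] at hxm
    have hxo : x ∈ Set.Ioo (0:ℝ) π := ⟨hxm.1, lt_of_le_of_ne hxm.2 hx⟩
    simp only [hQ]
    rw [hgd x hxo]
  have hT : (∫ θ in (0 : ℝ)..π, (deriv h θ) ^ 2 * Real.sin θ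
      + Real.sin (h θ) ^ 2 / Real.sin θ + κ * Real.sin (h θ - θ) ^ 2 * Real.sin θ)
      = ∫ t in (0:ℝ)..π, Q t :=
    intervalIntegral.integral_congr_ae hae
  -- final assembly
  set T := ∫ t in (0:ℝ)..π, Q t with hTdef
  have hT0 : 0 ≤ T := intervalIntegral.integral_nonneg hle hQpos
  have hchain : (deriv h (π/2))^2 ≤ Real.sqrt κ * T := by
    have e1 : (deriv h (π/2))^2/2 = ∫ t in (0:ℝ)..(π/2), F t := by
      rw [hFTC, hW0, hWhalf]; ring
    have e2 : (∫ t in (0:ℝ)..(π/2), F t) ≤ (Real.sqrt κ/2) * T := by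
      calc (∫ t in (0:ℝ)..(π/2), F t) ≤ ∫ t in (0:ℝ)..(π/2), R t := hFR
        _ ≤ (Real.sqrt κ/2) * ∫ t in (0:ℝ)..(π/2), Q t := by rw [← hconst]; exact hRQint
        _ ≤ (Real.sqrt κ/2) * T := by
            apply mul_le_mul_of_nonneg_left hQhalf (by positivity)
    linarith
  rw [hT]
  have harg : 2 * ((1/2) * T) * Real.sqrt κ = Real.sqrt κ * T := by ring
  rw [harg]
  rcases le_or_gt (-deriv h (π/2)) 0 with hp | hp
  · have : 0 ≤ 2 * Real.sqrt (Real.sqrt κ * T) := by positivity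
    linarith
  · have hp2 : (-deriv h (π/2))^2 ≤ Real.sqrt κ * T := by
      rw [neg_pow]
      simpa using hchain
    have h1 : -deriv h (π/2) ≤ Real.sqrt (Real.sqrt κ * T) := by
      rw [← Real.sqrt_sq hp.le]
      exact Real.sqrt_le_sqrt hp2
    have h2 : 0 ≤ Real.sqrt (Real.sqrt κ * T) := Real.sqrt_nonneg _
    linarith
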